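/- For every n ≥ 1 there exists a tuple P of n points in [0,1]^2 that attains the minimal L∞ star discrepancy among all n-point tuples in [0,1]^2 and such that the smallest first coordinate among the points of P equals d*(P) and the smallest second coordinate among the points of P equals d*(P). -/

import Mathlib

open Finset

noncomputable section

open scoped Classical

/-- Number of points of the tuple `P` lying in the open anchored box `[0,q)`. -/
def openCount {n d : ℕ} (P : Fin n → Fin d → ℝ) (q : Fin d → ℝ) : ℕ :=
  (Finset.univ.filter (fun i : Fin n => ∀ j, P i j < q j)).card

/-- Number of points of the tuple `P` lying in the closed anchored box `[0,q]`. -/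
def closedCount {n d : ℕ} (P : Fin n → Fin d → ℝ) (q : Fin d → ℝ) : ℕ :=
  (Finset.univ.filter (fun i : Fin n => ∀ j, P i j ≤ q j)).card

/-- Open local discrepancy `δ(P,q) = ∏ q_j − #{i : x⁽ⁱ⁾ ∈ [0,q)}/n`. -/
def openDisc {n d : ℕ} (P : Fin n → Fin d → ℝ) (q : Fin d → ℝ) : ℝ :=
  (∏ j, q j) - (openCount P q : ℝ) / n

/-- Closed local discrepancy `δ̄(P,q) = #{i : x⁽ⁱ⁾ ∈ [0,q]}/n − ∏ q_j`. -/
def closedDisc {n d : ℕ} (P : Fin n → Fin d → ℝ) (q : Fin d → ℝ) : ℝ :=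
  (closedCount P q : ℝ) / n - ∏ j, q j

/-- `max(δ(P,q), δ̄(P,q))`. -/
def localDisc {n d : ℕ} (P : Fin n → Fin d → ℝ) (q : Fin d → ℝ) : ℝ :=
  max (openDisc P q) (closedDisc P q)

/-- The L∞ star discrepancy `d*(P) = sup_{q ∈ [0,1]^d} max(δ(P,q), δ̄(P,q))`. -/
def starDisc {n d : ℕ} (P : Fin n → Fin d → ℝ) : ℝ :=
  sSup {r : ℝ | ∃ q : Fin d → ℝ, (∀ j, q j ∈ Set.Icc (0:ℝ) 1) ∧ r = localDisc P q}

section Aux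

variable {n : ℕ}

def starSet {n d : ℕ} (P : Fin n → Fin d → ℝ) : Set ℝ :=
  {r : ℝ | ∃ q : Fin d → ℝ, (∀ j, q j ∈ Set.Icc (0:ℝ) 1) ∧ r = localDisc P q}

lemma starDisc_eq {n d : ℕ} (P : Fin n → Fin d → ℝ) : starDisc P = sSup (starSet P) := rfl

lemma starSet_nonempty {n d : ℕ} (P : Fin n → Fin d → ℝ) : (starSet P).Nonempty :=
  ⟨localDisc P (fun _ => 0), fun _ => 0, fun _ => ⟨le_refl _, zero_le_one⟩, rfl⟩

lemma openCount_le {n d : ℕ} (P : Fin n → Fin d → ℝ) (q : Fin d → ℝ) : openCount P q ≤ n := by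
  simpa [openCount] using Finset.card_filter_le (Finset.univ : Finset (Fin n)) _

lemma closedCount_le {n d : ℕ} (P : Fin n → Fin d → ℝ) (q : Fin d → ℝ) : closedCount P q ≤ n := by
  simpa [closedCount] using Finset.card_filter_le (Finset.univ : Finset (Fin n)) _

lemma localDisc_le_one {n d : ℕ} (hn : 0 < n) (P : Fin n → Fin d → ℝ) (q : Fin d → ℝ)
    (hq : ∀ j, q j ∈ Set.Icc (0:ℝ) 1) : localDisc P q ≤ 1 := by
  have hq0 : (0:ℝ) ≤ ∏ j, q j := Finset.prod_nonneg fun j _ => (hq j).1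
  have hq1 : (∏ j, q j) ≤ 1 := Finset.prod_le_one (fun j _ => (hq j).1) (fun j _ => (hq j).2)
  have hnpos : (0:ℝ) < n := by exact_mod_cast hn
  have h1 : (openCount P q : ℝ) / n ≥ 0 := by positivity
  have h2 : (closedCount P q : ℝ) / n ≤ 1 := by
    rw [div_le_one hnpos]
    exact_mod_cast closedCount_le P q
  simp only [localDisc, max_le_iff, openDisc, closedDisc]
  constructor <;> linarith

lemma starSet_bddAbove {n d : ℕ} (hn : 0 < n) (P : Fin n → Fin d → ℝ) :
    BddAbove (starSet P) := by
  refine ⟨1, fun r hr => ?_⟩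
  obtain ⟨q, hq, rfl⟩ := hr
  exact localDisc_le_one hn P q hq

lemma localDisc_le_starDisc {n d : ℕ} (hn : 0 < n) (P : Fin n → Fin d → ℝ) (q : Fin d → ℝ)
    (hq : ∀ j, q j ∈ Set.Icc (0:ℝ) 1) : localDisc P q ≤ starDisc P :=
  le_csSup (starSet_bddAbove hn P) ⟨q, hq, rfl⟩

lemma starDisc_le {n d : ℕ} (P : Fin n → Fin d → ℝ) (c : ℝ)
    (h : ∀ q : Fin d → ℝ, (∀ j, q j ∈ Set.Icc (0:ℝ) 1) → localDisc P q ≤ c) :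
    starDisc P ≤ c := by
  refine csSup_le (starSet_nonempty P) ?_
  rintro r ⟨q, hq, rfl⟩
  exact h q hq

lemma starDisc_le_one {n d : ℕ} (hn : 0 < n) (P : Fin n → Fin d → ℝ) : starDisc P ≤ 1 :=
  starDisc_le P 1 (localDisc_le_one hn P)

lemma starDisc_nonneg {n : ℕ} (hn : 0 < n) (P : Fin n → Fin 2 → ℝ)
    (hP : ∀ i j, P i j ∈ Set.Icc (0:ℝ) 1) : 0 ≤ starDisc P := by
  have h := localDisc_le_starDisc hn P (fun _ => 0) (fun _ => ⟨le_refl _, zero_le_one⟩)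
  have h0 : openCount P (fun _ => 0) = 0 := by
    rw [openCount, Finset.card_eq_zero, Finset.filter_eq_empty_iff]
    intro i _ h
    exact absurd (h 0) (not_lt.2 (hP i 0).1)
  have : openDisc P (fun _ => 0) = 0 := by
    simp [openDisc, h0]
  calc (0:ℝ) = openDisc P (fun _ => 0) := this.symm
    _ ≤ localDisc P (fun _ => 0) := le_max_left _ _
    _ ≤ starDisc P := h

end Aux
section Aux2

lemma sInf_le_starDisc {n : ℕ} (hn : 0 < n) (P : Fin n → Fin 2 → ℝ)
    (hP : ∀ i j, P i j ∈ Set.Icc (0:ℝ) 1) (j : Fin 2) :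
    sInf (Set.range fun i => P i j) ≤ starDisc P := by
  haveI : NeZero n := ⟨hn.ne'⟩
  set m := sInf (Set.range fun i => P i j) with hm
  have hne : (Set.range fun i => P i j).Nonempty := Set.range_nonempty _
  have hbdd : BddBelow (Set.range fun i => P i j) := (Set.finite_range _).bddBelow
  have hm0 : 0 ≤ m := le_csInf hne (by rintro x ⟨i, rfl⟩; exact (hP i j).1)
  have hm1 : m ≤ 1 := le_trans (csInf_le hbdd ⟨0, rfl⟩) (hP 0 j).2
  set q : Fin 2 → ℝ := fun k => if k = j then m else 1 with hq
  have hqmem : ∀ k, q k ∈ Set.Icc (0:ℝ) 1 := by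
    intro k
    by_cases h : k = j <;> simp [hq, h, hm0, hm1]
  have h0 : openCount P q = 0 := by
    rw [openCount, Finset.card_eq_zero, Finset.filter_eq_empty_iff]
    intro i _ h
    have := h j
    simp only [hq, if_pos rfl] at this
    exact absurd this (not_lt.2 (csInf_le hbdd ⟨i, rfl⟩))
  have hprod : (∏ k, q k) = m := by
    rw [Fin.prod_univ_two]
    fin_cases j <;> simp [hq]
  have : openDisc P q = m := by simp [openDisc, h0, hprod]
  calc m = openDisc P q := this.symm
    _ ≤ localDisc P q := le_max_left _ _
    _ ≤ starDisc P := localDisc_le_starDisc hn P q hqmem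

lemma starDisc_lipschitz {n : ℕ} (hn : 0 < n) (P P' : Fin n → Fin 2 → ℝ)
    (hP : ∀ i j, P i j ∈ Set.Icc (0:ℝ) 1) (hP' : ∀ i j, P' i j ∈ Set.Icc (0:ℝ) 1)
    (ε : ℝ) (hε : 0 ≤ ε) (hd : ∀ i j, |P i j - P' i j| ≤ ε) :
    starDisc P ≤ starDisc P' + 2 * ε := by
  have hnpos : (0:ℝ) < n := by exact_mod_cast hn
  refine starDisc_le P _ (fun q hq => ?_)
  rw [localDisc, max_le_iff]
  constructor
  · -- open case
    set q' : Fin 2 → ℝ := fun k => max (q k - ε) 0 with hq'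
    have hq'mem : ∀ k, q' k ∈ Set.Icc (0:ℝ) 1 := fun k =>
      ⟨le_max_right _ _, max_le (by linarith [(hq k).2]) zero_le_one⟩
    have hcount : openCount P' q' ≤ openCount P q := by
      apply Finset.card_le_card
      intro i hi
      simp only [Finset.mem_filter, Finset.mem_univ, true_and] at hi ⊢
      intro k
      have h1 := hi k
      have h2 : 0 ≤ P' i k := (hP' i k).1
      have h3 : P' i k < q k - ε := by
        rcases le_or_gt (q k - ε) 0 with h | h
        · exfalso; rw [hq'] at h1; simp only [max_eq_right h] at h1; linarith
        · rw [hq'] at h1; simpa [max_eq_left h.le] using h1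
      have := abs_le.1 (hd i k)
      linarith [this.1]
    have hprod : (∏ k, q k) - 2 * ε ≤ ∏ k, q' k := by
      rw [Fin.prod_univ_two, Fin.prod_univ_two]
      have h00 := (hq 0).1; have h10 := (hq 1).1
      have a0 : q 0 - ε ≤ q' 0 := le_max_left _ _
      have a1 : q 1 - ε ≤ q' 1 := le_max_left _ _
      have b0 : 0 ≤ q' 0 := le_max_right _ _
      have b1 : 0 ≤ q' 1 := le_max_right _ _
      have c0 : q' 0 ≤ q 0 := max_le (by linarith) h00
      have c1 : q' 1 ≤ q 1 := max_le (by linarith) h10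
      have h11 := (hq 1).2
      have d0 : q' 0 ≤ 1 := le_trans c0 (hq 0).2
      have e1 : q 1 * (q 0 - q' 0) ≤ 1 * ε :=
        mul_le_mul h11 (by linarith) (by linarith) zero_le_one
      have e2 : q' 0 * (q 1 - q' 1) ≤ 1 * ε :=
        mul_le_mul d0 (by linarith) (by linarith) zero_le_one
      nlinarith [e1, e2]
    have hdiv : ((openCount P' q' : ℝ)) / n ≤ (openCount P q : ℝ) / n := by
      apply div_le_div_of_nonneg_right ?_ hnpos.le
      · exact_mod_cast hcount
    have key : openDisc P q ≤ openDisc P' q' + 2 * ε := by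
      rw [openDisc, openDisc]; linarith
    calc openDisc P q ≤ openDisc P' q' + 2 * ε := key
      _ ≤ localDisc P' q' + 2 * ε := add_le_add (le_max_left _ _) le_rfl
      _ ≤ starDisc P' + 2 * ε := by linarith [localDisc_le_starDisc hn P' q' hq'mem]
  · -- closed case
    set q' : Fin 2 → ℝ := fun k => min (q k + ε) 1 with hq'
    have hq'mem : ∀ k, q' k ∈ Set.Icc (0:ℝ) 1 := fun k =>
      ⟨le_min (by linarith [(hq k).1]) zero_le_one, min_le_right _ _⟩
    have hcount : closedCount P q ≤ closedCount P' q' := by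
      apply Finset.card_le_card
      intro i hi
      simp only [Finset.mem_filter, Finset.mem_univ, true_and] at hi ⊢
      intro k
      have h1 := hi k
      have := abs_le.1 (hd i k)
      exact le_min (by linarith [this.2]) (hP' i k).2
    have hprod : (∏ k, q' k) ≤ (∏ k, q k) + 2 * ε := by
      rw [Fin.prod_univ_two, Fin.prod_univ_two]
      have h00 := (hq 0).1; have h10 := (hq 1).1
      have a0 : q' 0 ≤ q 0 + ε := min_le_left _ _
      have a1 : q' 1 ≤ q 1 + ε := min_le_left _ _
      have b0 : q' 0 ≤ 1 := min_le_right _ _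
      have b1 : q' 1 ≤ 1 := min_le_right _ _
      have c0 : q 0 ≤ q' 0 := le_min (by linarith) (hq 0).2
      have c1 : q 1 ≤ q' 1 := le_min (by linarith) (hq 1).2
      have b0' : 0 ≤ q' 0 := le_trans h00 c0
      have e1 : q' 1 * (q' 0 - q 0) ≤ 1 * ε :=
        mul_le_mul b1 (by linarith) (by linarith) zero_le_one
      have e2 : q 0 * (q' 1 - q 1) ≤ 1 * ε :=
        mul_le_mul (hq 0).2 (by linarith) (by linarith) zero_le_one
      nlinarith [e1, e2]
    have hdiv : ((closedCount P q : ℝ)) / n ≤ (closedCount P' q' : ℝ) / n := by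
      apply div_le_div_of_nonneg_right ?_ hnpos.le
      · exact_mod_cast hcount
    have key : closedDisc P q ≤ closedDisc P' q' + 2 * ε := by
      rw [closedDisc, closedDisc]; linarith
    calc closedDisc P q ≤ closedDisc P' q' + 2 * ε := key
      _ ≤ localDisc P' q' + 2 * ε := add_le_add (le_max_right _ _) le_rfl
      _ ≤ starDisc P' + 2 * ε := by linarith [localDisc_le_starDisc hn P' q' hq'mem]

end Aux2
section Aux3

lemma abs_le_dist_pi {n : ℕ} (P P' : Fin n → Fin 2 → ℝ) (i : Fin n) (j : Fin 2) :
    |P i j - P' i j| ≤ dist P P' := by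
  rw [← Real.dist_eq]
  exact le_trans (dist_le_pi_dist (P i) (P' i) j) (dist_le_pi_dist P P' i)

lemma starDisc_continuousOn {n : ℕ} (hn : 0 < n) :
    ContinuousOn (starDisc : (Fin n → Fin 2 → ℝ) → ℝ)
      {P : Fin n → Fin 2 → ℝ | ∀ i j, P i j ∈ Set.Icc (0:ℝ) 1} := by
  have : LipschitzOnWith 2 (starDisc : (Fin n → Fin 2 → ℝ) → ℝ)
      {P : Fin n → Fin 2 → ℝ | ∀ i j, P i j ∈ Set.Icc (0:ℝ) 1} := by
    apply LipschitzOnWith.of_dist_le_mul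
    intro P hP P' hP'
    have hd : ∀ i j, |P i j - P' i j| ≤ dist P P' := abs_le_dist_pi P P'
    have hd' : ∀ i j, |P' i j - P i j| ≤ dist P P' := by
      intro i j; rw [abs_sub_comm]; exact hd i j
    have h1 := starDisc_lipschitz hn P P' hP hP' (dist P P') dist_nonneg hd
    have h2 := starDisc_lipschitz hn P' P hP' hP (dist P P') dist_nonneg hd'
    rw [Real.dist_eq, abs_le]
    push_cast
    constructor <;> linarith
  exact this.continuousOn

lemma exists_min {n : ℕ} (hn : 0 < n) :
    ∃ Q : Fin n → Fin 2 → ℝ, (∀ i j, Q i j ∈ Set.Icc (0:ℝ) 1) ∧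
      ∀ P : Fin n → Fin 2 → ℝ, (∀ i j, P i j ∈ Set.Icc (0:ℝ) 1) → starDisc Q ≤ starDisc P := by
  have hset : {P : Fin n → Fin 2 → ℝ | ∀ i j, P i j ∈ Set.Icc (0:ℝ) 1} =
      Set.pi Set.univ (fun _ : Fin n => Set.pi Set.univ fun _ : Fin 2 => Set.Icc (0:ℝ) 1) := by
    ext P; simp only [Set.mem_setOf_eq, Set.mem_pi, Set.mem_univ, forall_const, Set.mem_Icc,
      forall_and]
  have hcpt : IsCompact {P : Fin n → Fin 2 → ℝ | ∀ i j, P i j ∈ Set.Icc (0:ℝ) 1} := by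
    rw [hset]
    exact isCompact_univ_pi fun i => isCompact_univ_pi fun j => isCompact_Icc
  have hne : {P : Fin n → Fin 2 → ℝ | ∀ i j, P i j ∈ Set.Icc (0:ℝ) 1}.Nonempty :=
    ⟨fun _ _ => 0, fun i j => ⟨le_refl _, zero_le_one⟩⟩
  obtain ⟨Q, hQ, hmin⟩ := hcpt.exists_isMinOn hne (starDisc_continuousOn hn)
  exact ⟨Q, hQ, fun P hP => hmin hP⟩

end Aux3

/-- For every `n ≥ 1` there is an optimal `n`-point tuple in `[0,1]²` whose
smallest first coordinate and smallest second coordinate both equal `d*(P)`. -/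
theorem stmt_12 (n : ℕ) (hn : 1 ≤ n) :
    ∃ P : Fin n → Fin 2 → ℝ, (∀ i j, P i j ∈ Set.Icc (0:ℝ) 1) ∧
      (∀ Q : Fin n → Fin 2 → ℝ, (∀ i j, Q i j ∈ Set.Icc (0:ℝ) 1) → starDisc P ≤ starDisc Q) ∧
      sInf (Set.range (fun i => P i 0)) = starDisc P ∧
      sInf (Set.range (fun i => P i 1)) = starDisc P := by
  have hn0 : 0 < n := hn
  haveI : NeZero n := ⟨hn0.ne'⟩
  have hnpos : (0:ℝ) < n := by exact_mod_cast hn0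
  obtain ⟨Q, hQ, hmin⟩ := exists_min hn0
  set t := starDisc Q with htdef
  have ht0 : 0 ≤ t := starDisc_nonneg hn0 Q hQ
  have ht1 : t ≤ 1 := starDisc_le_one hn0 Q
  set P : Fin n → Fin 2 → ℝ := fun i j => max (Q i j) t with hPdef
  have hPbox : ∀ i j, P i j ∈ Set.Icc (0:ℝ) 1 := fun i j =>
    ⟨le_trans ht0 (le_max_right _ _), max_le (hQ i j).2 ht1⟩
  -- starDisc P ≤ t
  have hle : starDisc P ≤ t := by
    refine starDisc_le P t (fun q hq => ?_)
    rw [localDisc, max_le_iff]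
    constructor
    · by_cases hcase : ∀ j, t < q j
      · have hco : openCount P q = openCount Q q := by
          unfold openCount
          congr 1
          apply Finset.filter_congr
          intro i _
          constructor
          · intro h j; exact lt_of_le_of_lt (le_max_left _ _) (h j)
          · intro h j; exact max_lt (h j) (hcase j)
        have : openDisc P q = openDisc Q q := by rw [openDisc, openDisc, hco]
        rw [this]
        exact le_trans (le_max_left _ _) (localDisc_le_starDisc hn0 Q q hq)
      · push_neg at hcase
        obtain ⟨j0, hj0⟩ := hcase
        have hco : openCount P q = 0 := by
          rw [openCount, Finset.card_eq_zero, Finset.filter_eq_empty_iff]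
          intro i _ h
          exact absurd (h j0) (not_lt.2 (le_trans hj0 (le_max_right _ _)))
        have hprod : (∏ k, q k) ≤ t := by
          calc ∏ k, q k ≤ ∏ k, (if k = j0 then q k else 1) := by
                apply Finset.prod_le_prod (fun k _ => (hq k).1)
                intro k _
                by_cases h : k = j0 <;> simp [h, (hq k).2]
            _ = q j0 := by simp
            _ ≤ t := hj0
        rw [openDisc, hco]
        simpa using hprod
    · by_cases hcase : ∀ j, t ≤ q j
      · have hco : closedCount P q = closedCount Q q := by
          unfold closedCount
          congr 1
          apply Finset.filter_congr
          intro i _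
          constructor
          · intro h j; exact le_trans (le_max_left _ _) (h j)
          · intro h j; exact max_le (h j) (hcase j)
        have : closedDisc P q = closedDisc Q q := by rw [closedDisc, closedDisc, hco]
        rw [this]
        exact le_trans (le_max_right _ _) (localDisc_le_starDisc hn0 Q q hq)
      · push_neg at hcase
        obtain ⟨j0, hj0⟩ := hcase
        have hco : closedCount P q = 0 := by
          rw [closedCount, Finset.card_eq_zero, Finset.filter_eq_empty_iff]
          intro i _ h
          exact absurd (h j0) (not_le.2 (lt_of_lt_of_le hj0 (le_max_right _ _)))
        have hprod : (0:ℝ) ≤ ∏ k, q k := Finset.prod_nonneg fun k _ => (hq k).1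
        rw [closedDisc, hco]
        simp only [Nat.cast_zero, zero_div]
        linarith
  have heq : starDisc P = t := le_antisymm hle (hmin P hPbox)
  refine ⟨P, hPbox, fun R hR => heq ▸ hmin R hR, ?_, ?_⟩
  · rw [heq]
    refine le_antisymm (heq ▸ sInf_le_starDisc hn0 P hPbox 0) ?_
    exact le_csInf (Set.range_nonempty _) (by rintro x ⟨i, rfl⟩; exact le_max_right _ _)
  · rw [heq]
    refine le_antisymm (heq ▸ sInf_le_starDisc hn0 P hPbox 1) ?_
    exact le_csInf (Set.range_nonempty _) (by rintro x ⟨i, rfl⟩; exact le_max_right _ _)
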